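/- In the graph G' constructed from a directed graph G on n vertices (as in the Hamiltonian-path-to-trail reduction), every trail has length at most 2n + 1. -/

import Mathlib

/-- A trail of length `k` in the digraph with arc relation `A`: a walk along `k` arcs
with pairwise distinct arcs (vertices may repeat). -/
def TrailOn {W : Type*} (A : W → W → Prop) (k : ℕ) (v : ℕ → W) : Prop :=
  (∀ i < k, A (v i) (v (i + 1))) ∧
    ∀ i < k, ∀ j < k, (v i, v (i + 1)) = (v j, v (j + 1)) → i = j

/-- Vertices of the auxiliary graph G': `Sum.inl (v, false)` is v⁻, `Sum.inl (v, true)`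
is v⁺, `Sum.inr false` is s and `Sum.inr true` is t. -/
abbrev AuxV (V : Type*) := (V × Bool) ⊕ Bool

/-- Arcs of the auxiliary graph G': (v⁻,v⁺) for each vertex v, (u⁺,v⁻) for each arc
(u,v) of G, and (s,v⁻), (v⁺,t) for each vertex v. -/
def AuxA {V : Type*} (A : V → V → Prop) : AuxV V → AuxV V → Prop
  | Sum.inl (v, false), Sum.inl (w, true) => v = w
  | Sum.inl (u, true), Sum.inl (w, false) => A u w
  | Sum.inr false, Sum.inl (_, false) => True
  | Sum.inl (_, true), Sum.inr true => True
  | _, _ => False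

/-- every trail in G' has length at most 2n+1. -/
theorem aux_trail_length_le {V : Type*} [Fintype V] (A : V → V → Prop)
    (hloop : Irreflexive A) (k : ℕ) (v : ℕ → AuxV V)
    (ht : TrailOn (AuxA A) k v) :
    k ≤ 2 * Fintype.card V + 1 := by
  classical
  by_contra hk
  push_neg at hk
  set n := Fintype.card V with hn
  obtain ⟨harc, hdist⟩ := ht
  -- no step starts at t
  have hnt : ∀ i < k, v i ≠ Sum.inr true := by
    intro i hi h
    have ha := harc i hi
    rw [h] at ha
    rcases hv1 : v (i + 1) with ⟨x, b⟩ | b <;> rw [hv1] at ha <;>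
      cases b <;> exact ha
  -- after a minus vertex comes the corresponding plus vertex
  have hstep : ∀ i < k, ∀ x : V, v i = Sum.inl (x, false) →
      v (i + 1) = Sum.inl (x, true) := by
    intro i hi x h
    have ha := harc i hi
    rw [h] at ha
    rcases hv1 : v (i + 1) with ⟨y, b⟩ | b <;> rw [hv1] at ha <;> cases b
    · exact ha.elim
    · rw [ha]
    · exact ha.elim
    · exact ha.elim
  -- among two consecutive indices, one is at a minus vertex
  have hpair : ∀ i, i + 1 < k →
      (∃ x, v i = Sum.inl (x, false)) ∨ (∃ x, v (i + 1) = Sum.inl (x, false)) := by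
    intro i hik
    have hi : i < k := by omega
    have ha := harc i hi
    rcases hv : v i with ⟨x, b⟩ | b
    · cases b
      · exact Or.inl ⟨x, rfl⟩
      · rw [hv] at ha
        rcases hv1 : v (i + 1) with ⟨y, c⟩ | c <;> rw [hv1] at ha <;> cases c
        · exact Or.inr ⟨y, rfl⟩
        · exact ha.elim
        · exact ha.elim
        · exact absurd hv1 (hnt (i + 1) hik)
    · cases b
      · rw [hv] at ha
        rcases hv1 : v (i + 1) with ⟨y, c⟩ | c <;> rw [hv1] at ha <;> cases c
        · exact Or.inr ⟨y, rfl⟩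
        · exact ha.elim
        · exact ha.elim
        · exact ha.elim
      · exact absurd hv (hnt i hi)
  -- the index where a given minus vertex occurs is unique
  have huniq : ∀ i < k, ∀ j < k, ∀ x : V, v i = Sum.inl (x, false) →
      v j = Sum.inl (x, false) → i = j := by
    intro i hi j hj x hvi hvj
    apply hdist i hi j hj
    rw [hvi, hvj, hstep i hi x hvi, hstep j hj x hvj]
  -- the set of minus indices
  set M : Finset ℕ := (Finset.range k).filter
    (fun i => ∃ x : V, v i = Sum.inl (x, false)) with hM
  -- upper bound : M.card ≤ n
  have hupper : M.card ≤ n := by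
    have hinj : Function.Injective (fun x : V => (Sum.inl (x, false) : AuxV V)) := by
      intro a b h
      simpa using h
    calc M.card ≤ (Finset.univ.image (fun x : V => (Sum.inl (x, false) : AuxV V))).card := by
          apply Finset.card_le_card_of_injOn (fun i => v i)
          · intro i hi
            simp only [Finset.mem_coe, hM, Finset.mem_filter] at hi
            obtain ⟨x, hx⟩ := hi.2
            simp [hx]
          · intro i hi j hj hij
            simp only [hM, Finset.coe_filter, Set.mem_setOf_eq, Finset.mem_range] at hi hj
            obtain ⟨x, hx⟩ := hi.2
            obtain ⟨y, hy⟩ := hj.2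
            have : x = y := by simpa [hx, hy] using hij
            subst this
            exact huniq i hi.1 j hj.1 x hx hy
      _ = n := by rw [Finset.card_image_of_injective _ hinj, Finset.card_univ]
  -- lower bound : n + 1 ≤ M.card
  have hlower : n + 1 ≤ M.card := by
    set f : ℕ → ℕ := fun j =>
      if (∃ x : V, v (2 * j) = Sum.inl (x, false)) then 2 * j else 2 * j + 1 with hf
    have hrange : ∀ j, f j = 2 * j ∨ f j = 2 * j + 1 := by
      intro j
      by_cases h : ∃ x : V, v (2 * j) = Sum.inl (x, false)
      · exact Or.inl (by simp [hf, h])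
      · exact Or.inr (by simp [hf, h])
    calc n + 1 = (Finset.range (n + 1)).card := (Finset.card_range _).symm
      _ ≤ M.card := by
          apply Finset.card_le_card_of_injOn f
          · intro j hj
            rw [Finset.mem_coe, Finset.mem_range] at hj
            have h2j : 2 * j + 1 < k := by omega
            rw [Finset.mem_coe, hM, Finset.mem_filter, Finset.mem_range]
            by_cases h : ∃ x : V, v (2 * j) = Sum.inl (x, false)
            · have : f j = 2 * j := by simp [hf, h]
              rw [this]
              exact ⟨by omega, h⟩
            · have hfj : f j = 2 * j + 1 := by simp [hf, h]
              rw [hfj]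
              rcases hpair (2 * j) h2j with h' | h'
              · exact absurd h' h
              · exact ⟨h2j, h'⟩
          · intro j _ j' _ hjj'
            have h1 := hrange j
            have h2 := hrange j'
            rw [hjj'] at h1
            omega
  omega
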